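/- For every n ≥ 1 and every e ∈ I_n(0012), one has 0 ≤ srpt(e) ≤ last(e) ≤ n − 1. -/

import Mathlib

/-- `e : Fin n → ℕ` is an inversion sequence: `e i ≤ i` (0-indexed). -/
def IsInvSeq {n : ℕ} (e : Fin n → ℕ) : Prop := ∀ i : Fin n, e i ≤ (i : ℕ)

/-- `e` avoids the pattern 0012: there are no indices `i < j < k < l`
with `e i = e j < e k < e l`. -/
def Avoids0012 {n : ℕ} (e : Fin n → ℕ) : Prop :=
  ¬ ∃ i j k l : Fin n, i < j ∧ j < k ∧ k < l ∧ e i = e j ∧ e j < e k ∧ e k < e l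

/-- The set `I_n(0012)` of inversion sequences of length `n` avoiding `0012`. -/
def InvSeq0012 (n : ℕ) : Set (Fin n → ℕ) := {e | IsInvSeq e ∧ Avoids0012 e}

/-- `R(e)`: the set of values appearing more than once in `e`. -/
def repeats {n : ℕ} (e : Fin n → ℕ) : Set ℕ :=
  {m | ∃ i j : Fin n, i ≠ j ∧ e i = m ∧ e j = m}

open Classical in
/-- `srpt e = min R(e)` if `R(e) ≠ ∅`, and `n - 1` otherwise. -/
noncomputable def srpt {n : ℕ} (e : Fin n → ℕ) : ℕ :=
  if (repeats e).Nonempty then sInf (repeats e) else n - 1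

/-- The last entry of `e` (and `0` for the empty sequence). -/
def lastEntry {n : ℕ} (e : Fin n → ℕ) : ℕ :=
  if h : 0 < n then e ⟨n - 1, by omega⟩ else 0

/-- `γ(e)`: the sequence `e` with its last entry removed. -/
def gammaSeq {n : ℕ} (e : Fin n → ℕ) : Fin (n - 1) → ℕ :=
  fun i => e (Fin.castLE (Nat.sub_le n 1) i)

/-- `f n k ℓ`: the number of `e ∈ I_n(0012)` with `srpt e = k` and `last e = ℓ`. -/
noncomputable def f (n k ℓ : ℕ) : ℕ :=
  Set.ncard {e : Fin n → ℕ | e ∈ InvSeq0012 n ∧ srpt e = k ∧ lastEntry e = ℓ}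

/-- For every `n ≥ 1` and `e ∈ I_n(0012)`, `0 ≤ srpt e ≤ last e ≤ n - 1`. -/
theorem stmt5 (n : ℕ) (hn : 1 ≤ n) (e : Fin n → ℕ) (he : e ∈ InvSeq0012 n) :
    srpt e ≤ lastEntry e ∧ lastEntry e ≤ n - 1 := by
  obtain ⟨hinv, -⟩ := he
  have hlast : lastEntry e = e ⟨n - 1, by omega⟩ := by
    simp [lastEntry, show 0 < n by omega]
  have hle : lastEntry e ≤ n - 1 := by
    rw [hlast]; exact hinv _
  refine ⟨?_, hle⟩
  by_cases hne : (repeats e).Nonempty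
  · rw [srpt, if_pos hne]
    set m := sInf (repeats e) with hm
    have hmmem : m ∈ repeats e := Nat.sInf_mem hne
    obtain ⟨i, j, hij, hei, hej⟩ := hmmem
    have hmle : m ≤ n - 1 := by
      rw [← hei]
      exact le_trans (hinv i) (by omega)
    by_contra hcon
    push_neg at hcon
    rw [hlast] at hcon
    set ℓ := e ⟨n - 1, by omega⟩ with hℓ
    have hℓn : ℓ + 1 ≤ n := by omega
    -- the map on the first ℓ+1 indices
    have hginj : Function.Injective (fun t : Fin (ℓ + 1) =>
        (⟨e (Fin.castLE hℓn t), by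
          have := hinv (Fin.castLE hℓn t)
          simp only [Fin.coe_castLE] at this
          omega⟩ : Fin (ℓ + 1))) := by
      intro a b hab
      by_contra hne'
      simp only [Fin.mk.injEq] at hab
      have : e (Fin.castLE hℓn a) ∈ repeats e :=
        ⟨Fin.castLE hℓn a, Fin.castLE hℓn b, by
          simpa [Fin.ext_iff] using fun h => hne' (Fin.ext h), rfl, hab.symm⟩
      have := Nat.sInf_le this
      have hlt : e (Fin.castLE hℓn a) ≤ ℓ := by
        have := hinv (Fin.castLE hℓn a); simp only [Fin.coe_castLE] at this; omega
      omega
    have hgsurj := Finite.surjective_of_injective hginj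
    obtain ⟨t, ht⟩ := hgsurj ⟨ℓ, by omega⟩
    simp only [Fin.mk.injEq] at ht
    have htn : (Fin.castLE hℓn t : Fin n) ≠ ⟨n - 1, by omega⟩ := by
      intro h
      have := congrArg (Fin.val) h
      simp only [Fin.coe_castLE] at this
      have := t.isLt
      omega
    have : ℓ ∈ repeats e := ⟨Fin.castLE hℓn t, ⟨n - 1, by omega⟩, htn, ht, rfl⟩
    have := Nat.sInf_le this
    omega
  · rw [srpt, if_neg hne]
    have hinj : Function.Injective e := by
      intro a b hab
      by_contra hne'
      exact hne ⟨e a, a, b, hne', rfl, hab.symm⟩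
    have hinj' : Function.Injective (fun i : Fin n => (⟨e i, by
        have := hinv i; have := i.isLt; omega⟩ : Fin n)) := by
      intro a b hab
      simp only [Fin.mk.injEq] at hab
      exact hinj hab
    obtain ⟨i, hi⟩ := Finite.surjective_of_injective hinj' ⟨n - 1, by omega⟩
    simp only [Fin.mk.injEq] at hi
    have : (i : ℕ) = n - 1 := by
      have := hinv i; have := i.isLt; omega
    rw [hlast, show (⟨n - 1, by omega⟩ : Fin n) = i from Fin.ext this.symm, hi]
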